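/- Let W : ℝ^m × ℝ^m → ℝ be symmetric, lower semicontinuous with p-growth and p-coercivity (1 < p < ∞), and suppose min W < min Ŵ, where Ŵ is the diagonalization of W. Let Ω ⊆ ℝ^n be open, bounded, nonempty. Then |Ω|² · min Ŵ ≥ inf over u ∈ L^p(Ω; ℝ^m) of I_W(u) > |Ω|² · min W, where I_W(u) = ∫_Ω∫_Ω W(u(x), u(y)) dx dy. In particular, the infimum of the double integral strictly exceeds |Ω|² times the minimum of the integrand. -/

import Mathlib

open MeasureTheory Set

/-- The diagonalization of a set `E ⊆ V × V`. -/
def diagSet {V : Type*} (E : Set (V × V)) : Set (V × V) :=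
  {p ∈ E | (p.1, p.1) ∈ E ∧ (p.2, p.2) ∈ E}

/-- The diagonalization of a symmetric function. -/
noncomputable def diagFn {V : Type*} (W : V × V → ℝ) : V × V → ℝ :=
  fun p => sInf {c : ℝ | p ∈ diagSet {q | W q ≤ c}}

lemma diagFn_eq {V : Type*} (W : V × V → ℝ) (q : V × V) :
    diagFn W q = max (W q) (max (W (q.1, q.1)) (W (q.2, q.2))) := by
  have h : {c : ℝ | q ∈ diagSet {q' | W q' ≤ c}} =
      Set.Ici (max (W q) (max (W (q.1, q.1)) (W (q.2, q.2)))) := by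
    ext c
    simp [diagSet, Set.mem_setOf_eq, max_le_iff, Set.mem_Ici, and_assoc]
  rw [diagFn, h, csInf_Ici]

lemma near_diag_bound {m : ℕ} (W : EuclideanSpace ℝ (Fin m) × EuclideanSpace ℝ (Fin m) → ℝ)
    (hlsc : LowerSemicontinuous W) (b R : ℝ) (hR0 : 0 ≤ R)
    (hdiag : ∀ ξ, b < W (ξ, ξ)) :
    ∃ r > 0, ∀ ξ ζ : EuclideanSpace ℝ (Fin m),
      ξ ∈ Metric.closedBall 0 R → ζ ∈ Metric.closedBall 0 R → dist ξ ζ < r → b ≤ W (ξ, ζ) := by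
  classical
  have hopen : IsOpen (W ⁻¹' Set.Ioi b) := hlsc.isOpen_preimage b
  have hsel : ∀ ξ : EuclideanSpace ℝ (Fin m), ∃ t : ℝ, 0 < t ∧
      ∀ a c : EuclideanSpace ℝ (Fin m), dist a ξ < t → dist c ξ < t → b < W (a, c) := by
    intro ξ
    have hmem : (ξ, ξ) ∈ W ⁻¹' Set.Ioi b := hdiag ξ
    obtain ⟨t, ht, hsub⟩ := Metric.isOpen_iff.1 hopen _ hmem
    refine ⟨t, ht, fun a c ha hc => hsub ?_⟩
    rw [← ball_prod_same]
    exact Set.mk_mem_prod ha hc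
  choose t ht0 htW using hsel
  have hK : IsCompact (Metric.closedBall (0 : EuclideanSpace ℝ (Fin m)) R) :=
    isCompact_closedBall _ _
  obtain ⟨T₀, hT₀⟩ := hK.elim_finite_subcover
    (fun ξ : EuclideanSpace ℝ (Fin m) => Metric.ball ξ (t ξ / 2))
    (fun ξ => Metric.isOpen_ball)
    (fun ξ _ => Set.mem_iUnion.2 ⟨ξ, Metric.mem_ball_self (by linarith [ht0 ξ])⟩)
  have h0K : (0 : EuclideanSpace ℝ (Fin m)) ∈ Metric.closedBall (0 : EuclideanSpace ℝ (Fin m)) R :=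
    Metric.mem_closedBall_self hR0
  have hT₀ne : T₀.Nonempty := by
    have := hT₀ h0K
    rw [Set.mem_iUnion₂] at this
    obtain ⟨i, hi, _⟩ := this
    exact ⟨i, hi⟩
  refine ⟨T₀.inf' hT₀ne (fun ξ => t ξ / 2), ?_, ?_⟩
  · rw [gt_iff_lt, Finset.lt_inf'_iff]
    intro i _
    linarith [ht0 i]
  · intro ξ ζ hξ hζ hd
    have := hT₀ hξ
    rw [Set.mem_iUnion₂] at this
    obtain ⟨i, hiT, hξi⟩ := this
    have hri : T₀.inf' hT₀ne (fun ξ => t ξ / 2) ≤ t i / 2 := Finset.inf'_le _ hiT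
    have hξi' : dist ξ i < t i / 2 := Metric.mem_ball.1 hξi
    have hζi : dist ζ i < t i := by
      calc dist ζ i ≤ dist ζ ξ + dist ξ i := dist_triangle _ _ _
        _ < t i := by rw [dist_comm ζ ξ]; linarith
    exact (htW i ξ ζ (by linarith [ht0 i]) hζi).le

/-- Disjointified cover of a compact ball by small balls. -/
lemma disjoint_cover {m : ℕ} (R r : ℝ) (hr : 0 < r) :
    ∃ (N : ℕ) (D : Fin N → Set (EuclideanSpace ℝ (Fin m))) (cc : Fin N → EuclideanSpace ℝ (Fin m)),
      1 ≤ N ∧ (∀ i, MeasurableSet (D i)) ∧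
      (∀ i, D i ⊆ Metric.ball (cc i) (r / 2)) ∧
      (∀ x i j, x ∈ D i → x ∈ D j → i = j) ∧
      (∀ x : EuclideanSpace ℝ (Fin m), x ∈ Metric.closedBall 0 R → ∃ i, x ∈ D i) := by
  classical
  have hK : IsCompact (Metric.closedBall (0 : EuclideanSpace ℝ (Fin m)) R) :=
    isCompact_closedBall _ _
  obtain ⟨T, hT⟩ := hK.elim_finite_subcover
    (fun c : EuclideanSpace ℝ (Fin m) => Metric.ball c (r / 2))
    (fun _ => Metric.isOpen_ball)
    (fun ξ _ => Set.mem_iUnion.2 ⟨ξ, Metric.mem_ball_self (by linarith)⟩)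
  set T' : Finset (EuclideanSpace ℝ (Fin m)) := insert 0 T with hT'def
  have hT' : Metric.closedBall (0 : EuclideanSpace ℝ (Fin m)) R ⊆
      ⋃ c ∈ T', Metric.ball c (r / 2) := by
    refine hT.trans ?_
    intro x hx
    rw [Set.mem_iUnion₂] at hx ⊢
    obtain ⟨c, hc, hxc⟩ := hx
    exact ⟨c, Finset.mem_insert_of_mem hc, hxc⟩
  have hN1 : 1 ≤ T'.card := Finset.card_pos.2 ⟨0, Finset.mem_insert_self _ _⟩
  set cc : Fin T'.card → EuclideanSpace ℝ (Fin m) := fun i => (T'.equivFin.symm i : _) with hccdef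
  set B : Fin T'.card → Set (EuclideanSpace ℝ (Fin m)) :=
    fun i => Metric.ball (cc i) (r / 2) with hBdef
  set D : Fin T'.card → Set (EuclideanSpace ℝ (Fin m)) :=
    fun i => B i \ ⋃ (j : Fin T'.card) (_ : j < i), B j with hDdef
  refine ⟨T'.card, D, cc, hN1, ?_, ?_, ?_, ?_⟩
  · intro i
    exact measurableSet_ball.diff
      (MeasurableSet.iUnion fun j => MeasurableSet.iUnion fun _ => measurableSet_ball)
  · intro i
    exact Set.diff_subset
  · intro x i j hxi hxj
    by_contra hij
    rcases lt_or_gt_of_ne hij with h | h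
    · exact hxj.2 (Set.mem_iUnion₂.2 ⟨i, h, hxi.1⟩)
    · exact hxi.2 (Set.mem_iUnion₂.2 ⟨j, h, hxj.1⟩)
  · intro x hx
    have hxB : ∃ i : Fin T'.card, x ∈ B i := by
      have := hT' hx
      rw [Set.mem_iUnion₂] at this
      obtain ⟨c, hc, hxc⟩ := this
      refine ⟨T'.equivFin ⟨c, hc⟩, ?_⟩
      have hcc : cc (T'.equivFin ⟨c, hc⟩) = c := by
        simp [hccdef]
      show x ∈ Metric.ball (cc (T'.equivFin ⟨c, hc⟩)) (r / 2)
      rw [hcc]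
      exact hxc
    set s : Finset (Fin T'.card) := Finset.univ.filter (fun i => x ∈ B i) with hsdef
    have hsne : s.Nonempty := by
      obtain ⟨i, hi⟩ := hxB
      exact ⟨i, by simp [hsdef, hi]⟩
    refine ⟨s.min' hsne, ?_, ?_⟩
    · exact (Finset.mem_filter.1 (s.min'_mem hsne)).2
    · intro hmem
      rw [Set.mem_iUnion₂] at hmem
      obtain ⟨j, hj, hxj⟩ := hmem
      have hjs : j ∈ s := by simp [hsdef, hxj]
      exact absurd (s.min'_le j hjs) (not_le.2 hj)

set_option maxHeartbeats 2000000 in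
theorem stmt19 {n m : ℕ}
    (Ω : Set (EuclideanSpace ℝ (Fin n)))
    (hΩo : IsOpen Ω) (hΩb : Bornology.IsBounded Ω) (hΩne : Ω.Nonempty)
    (p : ℝ) (hp1 : 1 < p)
    (W : EuclideanSpace ℝ (Fin m) × EuclideanSpace ℝ (Fin m) → ℝ)
    (hsym : ∀ ξ ζ, W (ξ, ζ) = W (ζ, ξ))
    (hlsc : LowerSemicontinuous W)
    (hgrowth : ∃ C : ℝ, ∀ ξ ζ, W (ξ, ζ) ≤ C * (‖ξ‖ ^ p + ‖ζ‖ ^ p + 1))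
    (hcoercive : ∃ c C : ℝ, 0 < c ∧ 0 < C ∧
      ∀ ξ ζ, c * (‖ξ‖ ^ p + ‖ζ‖ ^ p) - C ≤ W (ξ, ζ))
    (mW mWhat : ℝ)
    (hmW : IsLeast (Set.range W) mW)
    (hmWhat : IsLeast (Set.range (diagFn W)) mWhat)
    (hlt : mW < mWhat) :
    sInf {y : ℝ | ∃ u : EuclideanSpace ℝ (Fin n) → EuclideanSpace ℝ (Fin m),
        MemLp u (ENNReal.ofReal p) (volume.restrict Ω) ∧
        (∫ x in Ω, ∫ y in Ω, W (u x, u y)) = y} ≤ (volume Ω).toReal ^ 2 * mWhat ∧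
    (volume Ω).toReal ^ 2 * mW <
      sInf {y : ℝ | ∃ u : EuclideanSpace ℝ (Fin n) → EuclideanSpace ℝ (Fin m),
        MemLp u (ENNReal.ofReal p) (volume.restrict Ω) ∧
        (∫ x in Ω, ∫ y in Ω, W (u x, u y)) = y} := by
  classical
  obtain ⟨Cg, hCg⟩ := hgrowth
  obtain ⟨c, C, hc, hC, hcoer⟩ := hcoercive
  have hp0 : (0:ℝ) < p := by linarith
  have hWlow : ∀ q, mW ≤ W q := fun q => hmW.2 ⟨q, rfl⟩
  have hWdiag : ∀ ξ, mWhat ≤ W (ξ, ξ) := by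
    intro ξ
    have h := hmWhat.2 ⟨(ξ, ξ), rfl⟩
    rw [diagFn_eq] at h
    simpa using h
  set ε : ℝ := (mWhat - mW) / 2 with hεdef
  have hε : 0 < ε := by rw [hεdef]; linarith
  have hmWε : mW + ε < mWhat := by rw [hεdef]; linarith
  set R : ℝ := max 1 (((mW + ε + C) / c) ^ (p⁻¹)) with hRdef
  have hR1 : (1:ℝ) ≤ R := le_max_left _ _
  have hR0 : (0:ℝ) ≤ R := by linarith
  have hcoerR : ∀ ξ ζ : EuclideanSpace ℝ (Fin m), R < ‖ξ‖ → mW + ε ≤ W (ξ, ζ) := by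
    intro ξ ζ hξ
    have ha1 : (0:ℝ) ≤ ‖ξ‖ ^ p := Real.rpow_nonneg (norm_nonneg _) p
    have ha2 : (0:ℝ) ≤ ‖ζ‖ ^ p := Real.rpow_nonneg (norm_nonneg _) p
    have h1 : c * ‖ξ‖ ^ p - C ≤ W (ξ, ζ) := le_trans (by nlinarith) (hcoer ξ ζ)
    have h2 : mW + ε ≤ c * ‖ξ‖ ^ p - C := by
      rcases le_or_gt ((mW + ε + C) / c) 0 with ht | ht
      · have h3 : mW + ε + C ≤ 0 := by
          by_contra h4
          push_neg at h4
          have := div_pos h4 hc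
          linarith
        nlinarith
      · have hR' : ((mW + ε + C) / c) ^ (p⁻¹) ≤ R := le_max_right _ _
        have h4 : (((mW + ε + C) / c) ^ (p⁻¹)) ^ p ≤ ‖ξ‖ ^ p :=
          Real.rpow_le_rpow (Real.rpow_nonneg ht.le _) (by linarith) hp0.le
        rw [Real.rpow_inv_rpow ht.le (ne_of_gt hp0)] at h4
        rw [div_le_iff₀ hc] at h4
        nlinarith
    linarith
  have hcoerR' : ∀ ξ ζ : EuclideanSpace ℝ (Fin m), R < ‖ζ‖ → mW + ε ≤ W (ξ, ζ) := by
    intro ξ ζ h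
    rw [hsym]
    exact hcoerR ζ ξ h
  obtain ⟨r, hr0, hball⟩ := near_diag_bound W hlsc (mW + ε) R hR0
    (fun ξ => lt_of_lt_of_le hmWε (hWdiag ξ))
  obtain ⟨N, D, cc, hN1, hDmeas, hDsub, hDuniq, hDcover⟩ := disjoint_cover (m := m) R r hr0
  set μ' : ℝ := (volume Ω).toReal with hμ'def
  have hΩfin : volume Ω < ⊤ := hΩb.measure_lt_top
  haveI hfin : IsFiniteMeasure (volume.restrict Ω) :=
    ⟨by rw [Measure.restrict_apply_univ]; exact hΩfin⟩
  have hμ'pos : 0 < μ' := ENNReal.toReal_pos (hΩo.measure_pos volume hΩne).ne' hΩfin.ne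
  have hNR : (1:ℝ) ≤ (N:ℝ) := by exact_mod_cast hN1
  have hNRpos : (0:ℝ) < (N:ℝ) := by linarith
  set γ : ℝ := ε * μ' ^ 2 / N with hγdef
  have hγpos : 0 < γ := div_pos (mul_pos hε (pow_pos hμ'pos 2)) hNRpos
  set S : Set ℝ := {y : ℝ | ∃ u : EuclideanSpace ℝ (Fin n) → EuclideanSpace ℝ (Fin m),
      MemLp u (ENNReal.ofReal p) (volume.restrict Ω) ∧
      (∫ x in Ω, ∫ y in Ω, W (u x, u y)) = y} with hSdef
  set C₀ : ℝ := max Cg 0 with hC₀def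
  have hC₀0 : (0:ℝ) ≤ C₀ := le_max_right _ _
  have hC₀g : Cg ≤ C₀ := le_max_left _ _
  have hnorm : ∀ ξ ζ : EuclideanSpace ℝ (Fin m),
      ‖W (ξ, ζ)‖ ≤ (|mW| + C₀ * ‖ξ‖ ^ p + C₀) + C₀ * ‖ζ‖ ^ p := by
    intro ξ ζ
    have ha1 : (0:ℝ) ≤ ‖ξ‖ ^ p := Real.rpow_nonneg (norm_nonneg _) p
    have ha2 : (0:ℝ) ≤ ‖ζ‖ ^ p := Real.rpow_nonneg (norm_nonneg _) p
    rw [Real.norm_eq_abs, abs_le]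
    constructor
    · have h1 := hWlow (ξ, ζ)
      have h2 : -|mW| ≤ mW := neg_abs_le mW
      nlinarith
    · have h1 := hCg ξ ζ
      have h2 : Cg * (‖ξ‖ ^ p + ‖ζ‖ ^ p + 1) ≤ C₀ * (‖ξ‖ ^ p + ‖ζ‖ ^ p + 1) :=
        mul_le_mul_of_nonneg_right hC₀g (by nlinarith)
      have h3 : (0:ℝ) ≤ |mW| := abs_nonneg mW
      nlinarith
  have hmeasW : Measurable W := hlsc.measurable
  -- the uniform lower bound for every element of S
  have hbound : ∀ y ∈ S, μ' ^ 2 * mW + γ ≤ y := by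
    rintro y ⟨u, hu, rfl⟩
    set v := hu.aestronglyMeasurable.mk u with hvdef
    have hvm : StronglyMeasurable v := hu.aestronglyMeasurable.stronglyMeasurable_mk
    have hv : Measurable v := hvm.measurable
    have hae : u =ᵐ[volume.restrict Ω] v := hu.aestronglyMeasurable.ae_eq_mk
    have hqint : Integrable (fun x => ‖v x‖ ^ p) (volume.restrict Ω) := by
      have h1 := hu.integrable_norm_rpow
        (by simp only [ne_eq, ENNReal.ofReal_eq_zero, not_le]; linarith) ENNReal.ofReal_ne_top
      rw [ENNReal.toReal_ofReal hp0.le] at h1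
      exact h1.congr (hae.mono fun x hx => by simp only [hx])
    set A : Fin N → Set (EuclideanSpace ℝ (Fin n)) := fun i => v ⁻¹' (D i) with hAdef
    have hA : ∀ i, MeasurableSet (A i) := fun i => hv (hDmeas i)
    set g : Fin N → EuclideanSpace ℝ (Fin n) → ℝ :=
      fun i => (A i).indicator (fun _ => (1:ℝ)) with hgdef
    have hgint : ∀ i, Integrable (g i) (volume.restrict Ω) :=
      fun i => (integrable_const 1).indicator (hA i)
    set a : Fin N → ℝ := fun i => ((volume.restrict Ω) (A i)).toReal with hadef
    have hga : ∀ i, (∫ x in Ω, g i x) = a i := by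
      intro i
      rw [hgdef]
      rw [integral_indicator_const (1:ℝ) (hA i)]
      simp [hadef, Measure.real]
    have hg0 : ∀ i x, 0 ≤ g i x := fun i x => Set.indicator_nonneg (fun _ _ => zero_le_one) x
    have hgm : ∀ i x, v x ∈ D i → g i x = 1 := fun i x hx => Set.indicator_of_mem (Set.mem_preimage.2 hx) fun _ => (1:ℝ)
    have ha0 : ∀ i, 0 ≤ a i := fun i => ENNReal.toReal_nonneg
    -- key pointwise inequality
    have hkey : ∀ x y', mW + ε ≤ W (v x, v y') +
        ε * ∑ i, ∑ j ∈ Finset.univ.erase i, g i x * g j y' := by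
      intro x y'
      have hsum0 : 0 ≤ ∑ i, ∑ j ∈ Finset.univ.erase i, g i x * g j y' :=
        Finset.sum_nonneg fun i _ => Finset.sum_nonneg fun j _ =>
          mul_nonneg (hg0 i x) (hg0 j y')
      have hεs : 0 ≤ ε * ∑ i, ∑ j ∈ Finset.univ.erase i, g i x * g j y' :=
        mul_nonneg hε.le hsum0
      rcases lt_or_ge R ‖v x‖ with hx | hx
      · have := hcoerR (v x) (v y') hx
        linarith
      rcases lt_or_ge R ‖v y'‖ with hy | hy
      · have := hcoerR' (v x) (v y') hy
        linarith
      have hxK : v x ∈ Metric.closedBall (0 : EuclideanSpace ℝ (Fin m)) R :=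
        Metric.mem_closedBall.2 (by rw [dist_zero_right]; exact hx)
      have hyK : v y' ∈ Metric.closedBall (0 : EuclideanSpace ℝ (Fin m)) R :=
        Metric.mem_closedBall.2 (by rw [dist_zero_right]; exact hy)
      obtain ⟨i, hi⟩ := hDcover (v x) hxK
      obtain ⟨j, hj⟩ := hDcover (v y') hyK
      rcases eq_or_ne i j with rfl | hij
      · have d1 : dist (v x) (cc i) < r / 2 := Metric.mem_ball.1 (hDsub i hi)
        have d2 : dist (v y') (cc i) < r / 2 := Metric.mem_ball.1 (hDsub i hj)
        have d2' : dist (cc i) (v y') < r / 2 := by rw [dist_comm]; exact d2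
        have h1 : dist (v x) (v y') < r := by
          linarith [dist_triangle (v x) (cc i) (v y')]
        have := hball _ _ hxK hyK h1
        linarith
      · have hx1 : g i x * g j y' = 1 := by rw [hgm i x hi, hgm j y' hj]; ring
        have hterm : (1:ℝ) ≤ ∑ j' ∈ Finset.univ.erase i, g i x * g j' y' := by
          calc (1:ℝ) = g i x * g j y' := hx1.symm
            _ ≤ ∑ j' ∈ Finset.univ.erase i, g i x * g j' y' :=
              Finset.single_le_sum (f := fun j' => g i x * g j' y')
                (fun k _ => mul_nonneg (hg0 _ _) (hg0 _ _))
                (Finset.mem_erase.2 ⟨hij.symm, Finset.mem_univ j⟩)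
        have h1 : (1:ℝ) ≤ ∑ i', ∑ j' ∈ Finset.univ.erase i', g i' x * g j' y' := by
          calc (1:ℝ) ≤ ∑ j' ∈ Finset.univ.erase i, g i x * g j' y' := hterm
            _ ≤ ∑ i', ∑ j' ∈ Finset.univ.erase i', g i' x * g j' y' :=
              Finset.single_le_sum (f := fun i' => ∑ j' ∈ Finset.univ.erase i', g i' x * g j' y')
                (fun k _ => Finset.sum_nonneg fun j' _ => mul_nonneg (hg0 _ _) (hg0 _ _))
                (Finset.mem_univ i)
        have h2 := hWlow (v x, v y')
        nlinarith
    -- integrability of the inner functions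
    have hFmeas : ∀ x, AEStronglyMeasurable (fun y' => W (v x, v y')) (volume.restrict Ω) :=
      fun x => ((hmeasW.comp (measurable_const.prodMk hv)).stronglyMeasurable).aestronglyMeasurable
    have hdomint : ∀ x : EuclideanSpace ℝ (Fin n),
        Integrable (fun y' => (|mW| + C₀ * ‖v x‖ ^ p + C₀) + C₀ * ‖v y'‖ ^ p)
        (volume.restrict Ω) := fun x => (integrable_const _).add (hqint.const_mul C₀)
    have hFint : ∀ x, Integrable (fun y' => W (v x, v y')) (volume.restrict Ω) := fun x =>
      Integrable.mono' (hdomint x) (hFmeas x) (Filter.Eventually.of_forall fun y' => hnorm _ _)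
    have hSSint : ∀ x, Integrable (fun y' => ∑ i, ∑ j ∈ Finset.univ.erase i, g i x * g j y')
        (volume.restrict Ω) := fun x =>
      integrable_finset_sum _ fun i _ => integrable_finset_sum _ fun j _ =>
        (hgint j).const_mul (g i x)
    have hSSval : ∀ x, (∫ y' in Ω, ∑ i, ∑ j ∈ Finset.univ.erase i, g i x * g j y')
        = ∑ i, ∑ j ∈ Finset.univ.erase i, g i x * a j := by
      intro x
      rw [integral_finset_sum _
        (fun i _ => integrable_finset_sum _ fun j _ => (hgint j).const_mul (g i x))]
      refine Finset.sum_congr rfl fun i _ => ?_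
      rw [integral_finset_sum _ (fun j _ => (hgint j).const_mul (g i x))]
      refine Finset.sum_congr rfl fun j _ => ?_
      rw [integral_const_mul, hga j]
    -- inner inequality
    have hinner : ∀ x, (mW + ε) * μ' - ε * ∑ i, ∑ j ∈ Finset.univ.erase i, g i x * a j
        ≤ ∫ y' in Ω, W (v x, v y') := by
      intro x
      have h1 : (∫ y' in Ω, ((mW + ε) - ε * ∑ i, ∑ j ∈ Finset.univ.erase i, g i x * g j y'))
          ≤ ∫ y' in Ω, W (v x, v y') := by
        refine integral_mono ((integrable_const _).sub ((hSSint x).const_mul ε)) (hFint x) ?_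
        intro y'
        have := hkey x y'
        simp only
        linarith
      rw [integral_sub (integrable_const _) ((hSSint x).const_mul ε), integral_const,
        integral_const_mul, hSSval x, measureReal_def, Measure.restrict_apply_univ] at h1
      calc (mW + ε) * μ' - ε * ∑ i, ∑ j ∈ Finset.univ.erase i, g i x * a j
          = (volume Ω).toReal • (mW + ε)
            - ε * ∑ i, ∑ j ∈ Finset.univ.erase i, g i x * a j := by
            rw [smul_eq_mul, hμ'def]; ring
        _ ≤ ∫ y' in Ω, W (v x, v y') := h1
    -- outer measurability and integrability
    have hprodmeas : StronglyMeasurable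
        (fun z : EuclideanSpace ℝ (Fin n) × EuclideanSpace ℝ (Fin n) => W (v z.1, v z.2)) :=
      (hmeasW.comp ((hv.comp measurable_fst).prodMk (hv.comp measurable_snd))).stronglyMeasurable
    have houter_sm : StronglyMeasurable (fun x => ∫ y' in Ω, W (v x, v y')) :=
      hprodmeas.integral_prod_right'
    set Kq : ℝ := ∫ x in Ω, ‖v x‖ ^ p with hKqdef
    have houter_int : Integrable (fun x => ∫ y' in Ω, W (v x, v y')) (volume.restrict Ω) := by
      refine Integrable.mono'
        (g := fun x => (C₀ * μ') * ‖v x‖ ^ p + ((|mW| + C₀) * μ' + C₀ * Kq))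
        ((hqint.const_mul _).add (integrable_const _)) houter_sm.aestronglyMeasurable
        (Filter.Eventually.of_forall fun x => ?_)
      have h1 : ‖∫ y' in Ω, W (v x, v y')‖ ≤ ∫ y' in Ω, ‖W (v x, v y')‖ :=
        norm_integral_le_integral_norm _
      have h2 : (∫ y' in Ω, ‖W (v x, v y')‖)
          ≤ ∫ y' in Ω, ((|mW| + C₀ * ‖v x‖ ^ p + C₀) + C₀ * ‖v y'‖ ^ p) :=
        integral_mono (hFint x).norm (hdomint x) (fun y' => hnorm _ _)
      have h3 : (∫ y' in Ω, ((|mW| + C₀ * ‖v x‖ ^ p + C₀) + C₀ * ‖v y'‖ ^ p))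
          = (|mW| + C₀ * ‖v x‖ ^ p + C₀) * μ' + C₀ * Kq := by
        rw [integral_add (integrable_const _) (hqint.const_mul C₀), integral_const,
          integral_const_mul, measureReal_def, Measure.restrict_apply_univ]
        rw [smul_eq_mul, hμ'def, hKqdef]
        ring
      calc ‖∫ y' in Ω, W (v x, v y')‖
          ≤ (|mW| + C₀ * ‖v x‖ ^ p + C₀) * μ' + C₀ * Kq := by linarith
        _ = (C₀ * μ') * ‖v x‖ ^ p + ((|mW| + C₀) * μ' + C₀ * Kq) := by ring
    have hSS2int : Integrable (fun x => ∑ i, ∑ j ∈ Finset.univ.erase i, g i x * a j)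
        (volume.restrict Ω) :=
      integrable_finset_sum _ fun i _ => integrable_finset_sum _ fun j _ =>
        (hgint i).mul_const (a j)
    have houter : (∫ x in Ω, ((mW + ε) * μ' - ε * ∑ i, ∑ j ∈ Finset.univ.erase i, g i x * a j))
        ≤ ∫ x in Ω, ∫ y' in Ω, W (v x, v y') :=
      integral_mono ((integrable_const _).sub (hSS2int.const_mul ε)) houter_int
        (fun x => hinner x)
    have houtval : (∫ x in Ω, ((mW + ε) * μ' - ε * ∑ i, ∑ j ∈ Finset.univ.erase i, g i x * a j))
        = (mW + ε) * μ' ^ 2 - ε * ∑ i, ∑ j ∈ Finset.univ.erase i, a i * a j := by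
      rw [integral_sub (integrable_const _) (hSS2int.const_mul ε), integral_const,
        integral_const_mul, measureReal_def, Measure.restrict_apply_univ]
      have h4 : (∫ x in Ω, ∑ i, ∑ j ∈ Finset.univ.erase i, g i x * a j)
          = ∑ i, ∑ j ∈ Finset.univ.erase i, a i * a j := by
        rw [integral_finset_sum _
          (fun i _ => integrable_finset_sum _ fun j _ => (hgint i).mul_const (a j))]
        refine Finset.sum_congr rfl fun i _ => ?_
        rw [integral_finset_sum _ (fun j _ => (hgint i).mul_const (a j))]
        refine Finset.sum_congr rfl fun j _ => ?_
        rw [integral_mul_const, hga i]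
      rw [h4, smul_eq_mul, hμ'def]
      ring
    have hcongr : (∫ x in Ω, ∫ y in Ω, W (u x, u y)) = ∫ x in Ω, ∫ y' in Ω, W (v x, v y') := by
      refine integral_congr_ae ?_
      filter_upwards [hae] with x hx
      refine integral_congr_ae ?_
      filter_upwards [hae] with y hy
      rw [hx, hy]
    -- sum estimates
    have hAdisj : Pairwise (Function.onFun Disjoint A) := by
      intro i j hij
      rw [Function.onFun, Set.disjoint_left]
      intro x hxi hxj
      exact hij (hDuniq (v x) i j hxi hxj)
    have hsum_le : ∑ i, a i ≤ μ' := by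
      have h2 : (∑ i, (volume.restrict Ω) (A i)) ≤ volume Ω := by
        rw [← tsum_fintype (L := .unconditional _), ← measure_iUnion hAdisj hA]
        calc (volume.restrict Ω) (⋃ i, A i) ≤ (volume.restrict Ω) Set.univ :=
            measure_mono (Set.subset_univ _)
          _ = volume Ω := Measure.restrict_apply_univ _
      calc ∑ i, a i = (∑ i, (volume.restrict Ω) (A i)).toReal :=
          (ENNReal.toReal_sum fun i _ => measure_ne_top _ _).symm
        _ ≤ μ' := ENNReal.toReal_mono hΩfin.ne h2
    have halg : ∑ i, ∑ j ∈ Finset.univ.erase i, a i * a j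
        = (∑ i, a i) ^ 2 - ∑ i, a i ^ 2 := by
      have h1 : ∀ i : Fin N, ∑ j ∈ Finset.univ.erase i, a i * a j
          = a i * ((∑ j, a j) - a i) := by
        intro i
        rw [← Finset.mul_sum, Finset.sum_erase_eq_sub (Finset.mem_univ i)]
      rw [Finset.sum_congr rfl fun i _ => h1 i]
      calc ∑ i, a i * ((∑ j, a j) - a i)
          = ∑ i, (a i * (∑ j, a j) - a i * a i) :=
            Finset.sum_congr rfl fun i _ => by ring
        _ = (∑ i, a i * (∑ j, a j)) - ∑ i, a i * a i := Finset.sum_sub_distrib _ _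
        _ = (∑ i, a i) ^ 2 - ∑ i, a i ^ 2 := by
            rw [← Finset.sum_mul]
            exact congrArg₂ _ (by ring) (Finset.sum_congr rfl fun i _ => by ring)
    have hcs : (∑ i, a i) ^ 2 ≤ (N : ℝ) * ∑ i, a i ^ 2 := by
      have := sq_sum_le_card_mul_sum_sq (s := (Finset.univ : Finset (Fin N))) (f := a)
      simpa using this
    have hs0 : 0 ≤ ∑ i, a i := Finset.sum_nonneg fun i _ => ha0 i
    have hsq : (∑ i, a i) ^ 2 ≤ μ' ^ 2 := by nlinarith
    have h5 := houter
    rw [houtval, halg] at h5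
    rw [hcongr]
    have hkey2 : γ ≤ ε * μ' ^ 2 - ε * (∑ i, a i) ^ 2 + ε * ∑ i, a i ^ 2 := by
      rw [hγdef, div_le_iff₀ hNRpos]
      nlinarith [mul_le_mul_of_nonneg_left hsq (mul_nonneg (sub_nonneg.2 hNR) hε.le),
        mul_le_mul_of_nonneg_left hcs hε.le]
    linarith
  -- the element of S given by the constant function
  obtain ⟨q0, hq0⟩ := hmWhat.1
  have hW00 : W (q0.1, q0.1) ≤ mWhat := by
    rw [← hq0, diagFn_eq]
    exact le_max_of_le_right (le_max_left _ _)
  have hmem : μ' ^ 2 * W (q0.1, q0.1) ∈ S := by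
    refine ⟨fun _ => q0.1, memLp_const _, ?_⟩
    rw [setIntegral_const, setIntegral_const]
    rw [smul_eq_mul, smul_eq_mul, hμ'def]
    simp only [Measure.real]
    ring
  constructor
  · refine le_trans (csInf_le ⟨μ' ^ 2 * mW + γ, fun y hy => hbound y hy⟩ hmem) ?_
    have := mul_le_mul_of_nonneg_left hW00 (sq_nonneg μ')
    linarith
  · have h1 := le_csInf ⟨_, hmem⟩ hbound
    linarith
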